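/- arXiv:2507.03502 — 2 statements merged into one kernel-verified Lean document; each statement's English description precedes it below -/
import Mathlib

section
/- In a finite-horizon Markov game with finite state and action spaces, for any player i and Markovian policy π, and any Markovian stochastic modification φ̄^i ∈ Φ^i_M, there exists a weight vector α ∈ Δ(K^i), where {φ^i(1), ..., φ^i(K^i)} enumerates the finite set Φ^i_{M,det} of Markovian deterministic modifications, such that d^{φ̄^i ∘ π}_t(s,a) = Σ_{k=1}^{K^i} α_k d^{φ^i(k) ∘ π}_t(s,a) for all (s,a) ∈ S × A and t ∈ [H]. Conversely, for every α ∈ Δ(K^i) there exists φ̄^i ∈ Φ^i_M with the same equality. -/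
open Finset

namespace MG

noncomputable section

variable {S : Type} {ι : Type} {A : ι → Type}
variable [Fintype S] [DecidableEq S] [Fintype ι] [DecidableEq ι]
variable [∀ i, Fintype (A i)] [∀ i, DecidableEq (A i)]

/-- A finitely supported probability distribution represented as a real-valued function. -/
def IsDist {X : Type} [Fintype X] (p : X → ℝ) : Prop :=
  (∀ x, 0 ≤ p x) ∧ ∑ x, p x = 1

/-- A Markovian joint policy: at each time `t` and state `s`, a distribution over joint actions. -/
abbrev MPolicy (S : Type) (A : ι → Type) := ℕ → S → (∀ i, A i) → ℝ

def IsMPolicy (π : MPolicy S A) : Prop := ∀ t s, IsDist (π t s)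

/-- A valid transition kernel. -/
def IsKernel (P : ℕ → S → (∀ i, A i) → S → ℝ) : Prop := ∀ t s a, IsDist (P t s a)

/-- A general (history-dependent, possibly non-Markovian) joint policy. -/
abbrev HPolicy (S : Type) (A : ι → Type) :=
  (t : ℕ) → (Fin t → S × (∀ i, A i)) → S → (∀ i, A i) → ℝ

/-- A Markovian policy viewed as a history-dependent policy. -/
def lift (π : MPolicy S A) : HPolicy S A := fun t _ s a => π t s a

/-- Probability that, under initial distribution `ρ`, kernels `P` and general policy `σ`,
the history `h` occurred during the first `t` steps and the current state is `s`. -/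
def histProb (ρ : S → ℝ) (P : ℕ → S → (∀ i, A i) → S → ℝ) (σ : HPolicy S A) :
    (t : ℕ) → (Fin t → S × (∀ i, A i)) → S → ℝ
  | 0, _, s => ρ s
  | (t+1), h, s =>
      histProb ρ P σ t (fun k => h k.castSucc) (h (Fin.last t)).1 *
        σ t (fun k => h k.castSucc) (h (Fin.last t)).1 (h (Fin.last t)).2 *
        P t (h (Fin.last t)).1 (h (Fin.last t)).2 s

/-- State-action occupancy measure at (0-based) time `t` of a general policy `σ`. -/
def occ (ρ : S → ℝ) (P : ℕ → S → (∀ i, A i) → S → ℝ) (σ : HPolicy S A)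
    (t : ℕ) (s : S) (a : ∀ i, A i) : ℝ :=
  ∑ h : Fin t → S × (∀ i, A i), histProb ρ P σ t h s * σ t h s a

/-- Expected cumulative value of a stage function `f` over horizon `H` under policy `σ`. -/
def val (ρ : S → ℝ) (P : ℕ → S → (∀ i, A i) → S → ℝ) (H : ℕ)
    (f : ℕ → S → (∀ i, A i) → ℝ) (σ : HPolicy S A) : ℝ :=
  ∑ t ∈ Finset.range H, ∑ s, ∑ a, occ ρ P σ t s a * f t s a

/-- Non-Markovian stochastic modification for player `i`:
`φ t hist s b c` is the probability of replacing the sampled action `b` by `c`. -/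
abbrev NMMod (S : Type) (A : ι → Type) (i : ι) :=
  (t : ℕ) → (Fin t → S × (∀ i, A i)) → S → A i → A i → ℝ

def IsNMMod {i : ι} (φ : NMMod S A i) : Prop := ∀ t h s b, IsDist (φ t h s b)

/-- Markovian stochastic modification for player `i`. -/
abbrev MMod (S : Type) (A : ι → Type) (i : ι) := ℕ → S → A i → A i → ℝ

def IsMMod {i : ι} (φ : MMod S A i) : Prop := ∀ t s b, IsDist (φ t s b)

/-- A Markovian modification viewed as a non-Markovian one. -/
def mliftMod {i : ι} (φ : MMod S A i) : NMMod S A i := fun t _ s b c => φ t s b c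

/-- The modified (history-dependent) policy `φ ∘ π`. -/
def modNM (i : ι) (φ : NMMod S A i) (π : MPolicy S A) : HPolicy S A :=
  fun t h s a => ∑ b : A i, φ t h s b (a i) * π t s (Function.update a i b)

/-- The modified Markovian policy `φ ∘ π` for a Markovian modification. -/
def modM (i : ι) (φ : MMod S A i) (π : MPolicy S A) : MPolicy S A :=
  fun t s a => ∑ b : A i, φ t s b (a i) * π t s (Function.update a i b)

/-- Markovian deterministic modifications over horizon `H`. -/
abbrev DMod (S : Type) (A : ι → Type) (H : ℕ) (i : ι) := Fin H → S → A i → A i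

/-- A deterministic modification viewed as a Markovian stochastic one
(identity beyond the horizon). -/
def detToM {H : ℕ} {i : ι} (k : DMod S A H i) : MMod S A i :=
  fun t s b c => if h : t < H then (if c = k ⟨t, h⟩ s b then 1 else 0)
                 else (if c = b then 1 else 0)

/-! ### The first augmented MDP (for a fixed player `i` and Markovian policy `π`) -/

/-- Transition kernel of the first augmented MDP, between genuine augmented states. -/
def Ptilde (P : ℕ → S → (∀ i, A i) → S → ℝ) (π : MPolicy S A) (i : ι) (t : ℕ)
    (x : (Fin t → S × (∀ i, A i)) × S × A i) (ahat : A i)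
    (y : (Fin (t+1) → S × (∀ i, A i)) × S × A i) : ℝ :=
  if (∀ k : Fin t, y.1 k.castSucc = x.1 k) ∧ (y.1 (Fin.last t)).1 = x.2.1 ∧
      (y.1 (Fin.last t)).2 i = ahat then
    (1 / (Fintype.card (A i) : ℝ)) * P t x.2.1 (y.1 (Fin.last t)).2 y.2.1 *
      π t x.2.1 (Function.update (y.1 (Fin.last t)).2 i x.2.2)
  else 0

/-- Transition probability into the absorbing state `b` in the first augmented MDP. -/
def PtildeB (π : MPolicy S A) (i : ι) (t : ℕ)
    (x : (Fin t → S × (∀ i, A i)) × S × A i) (_ahat : A i) : ℝ :=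
  1 - ∑ a : ∀ i, A i, if a i = x.2.2 then π t x.2.1 a else 0

/-- Initial distribution of the augmented MDPs: `ρ̃(s, aⁱ) = ρ(s)/|Aⁱ|`. -/
def rhoTilde (ρ : S → ℝ) (i : ι) (x : S × A i) : ℝ := ρ x.1 / (Fintype.card (A i) : ℝ)

/-- Occupancy measure of a (history-dependent) policy `φ` in the first augmented MDP. -/
def dtil (ρ : S → ℝ) (P : ℕ → S → (∀ i, A i) → S → ℝ) (π : MPolicy S A)
    (i : ι) (φ : NMMod S A i) :
    (t : ℕ) → ((Fin t → S × (∀ i, A i)) × S × A i) → A i → ℝ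
  | 0, x, b => rhoTilde ρ i x.2 * φ 0 x.1 x.2.1 x.2.2 b
  | (t+1), x, b =>
      (∑ x' : (Fin t → S × (∀ i, A i)) × S × A i, ∑ c : A i,
        dtil ρ P π i φ t x' c * Ptilde P π i t x' c x) * φ (t+1) x.1 x.2.1 x.2.2 b

/-! ### The second augmented MDP -/

/-- Transition kernel of the second augmented MDP (states `S × A i`). -/
def Pbar (P : ℕ → S → (∀ i, A i) → S → ℝ) (π : MPolicy S A) (i : ι) (t : ℕ)
    (x : S × A i) (ahat : A i) (y : S × A i) : ℝ :=
  (1 / (Fintype.card (A i) : ℝ)) *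
    ∑ a : ∀ i, A i, if a i = ahat then
      P t x.1 a y.1 * π t x.1 (Function.update a i x.2) else 0

/-- Transition probability into the absorbing state `b` in the second augmented MDP. -/
def PbarB (π : MPolicy S A) (i : ι) (t : ℕ) (x : S × A i) (_ahat : A i) : ℝ :=
  1 - ∑ a : ∀ i, A i, if a i = x.2 then π t x.1 a else 0

/-- Occupancy measure of a Markovian modification `φ` (seen as a policy)
in the second augmented MDP. -/
def dbar (ρ : S → ℝ) (P : ℕ → S → (∀ i, A i) → S → ℝ) (π : MPolicy S A)
    (i : ι) (φ : MMod S A i) : ℕ → S × A i → A i → ℝ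
  | 0 => fun x b => rhoTilde ρ i x * φ 0 x.1 x.2 b
  | (t+1) => fun x b =>
      (∑ x' : S × A i, ∑ c : A i, dbar ρ P π i φ t x' c * Pbar P π i t x' c x) *
        φ (t+1) x.1 x.2 b

/-- Reward of the second augmented MDP induced by a reward `r` of the original game. -/
def rbar (π : MPolicy S A) (i : ι) (r : ℕ → S → (∀ i, A i) → ℝ) (t : ℕ)
    (x : S × A i) (ahat : A i) : ℝ :=
  (Fintype.card (A i) : ℝ) ^ (t + 1) *
    ∑ a : ∀ i, A i, if a i = ahat then
      r t x.1 a * π t x.1 (Function.update a i x.2) else 0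

/-! ### Feasible occupancy measures, policy extraction, and the LP -/

/-- The set of feasible state-action occupancy measures (common coupling constraints). -/
def Cd (ρ : S → ℝ) (P : ℕ → S → (∀ i, A i) → S → ℝ) (H J : ℕ)
    (g : Fin J → ℕ → S → (∀ i, A i) → ℝ) (c : Fin J → ℝ) :
    Set (Fin H → S → (∀ i, A i) → ℝ) :=
  {x | ∃ π : MPolicy S A, IsMPolicy π ∧ (∀ j, c j ≤ val ρ P H (g j) (lift π)) ∧
        ∀ (t : Fin H) (s : S) (a : ∀ i, A i), x t s a = occ ρ P (lift π) t.1 s a}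

/-- Policy extraction from an occupancy measure (arbitrary where the marginal vanishes). -/
def Gamma (H : ℕ)
    (d : Fin H → S → (∀ i, A i) → ℝ) : Set (MPolicy S A) :=
  {π | IsMPolicy π ∧ ∀ (t : Fin H) (s : S) (a : ∀ i, A i),
      (∑ a', d t s a') ≠ 0 → π t.1 s a = d t s a / ∑ a', d t s a'}

/-- Objective of the linear program `LPⁱ(π)`. -/
def LPobj (ρ : S → ℝ) (P : ℕ → S → (∀ i, A i) → S → ℝ) (H : ℕ)
    (r : ℕ → S → (∀ i, A i) → ℝ) (i : ι) (π : MPolicy S A)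
    (α : DMod S A H i → ℝ) : ℝ :=
  ∑ k, α k * val ρ P H r (lift (modM i (detToM k) π))

/-- Feasibility for the linear program `LPⁱ(π)`. -/
def LPfeas (ρ : S → ℝ) (P : ℕ → S → (∀ i, A i) → S → ℝ) (H J : ℕ)
    (g : Fin J → ℕ → S → (∀ i, A i) → ℝ) (c : Fin J → ℝ) (i : ι) (π : MPolicy S A)
    (α : DMod S A H i → ℝ) : Prop :=
  (∀ k, 0 ≤ α k) ∧ (∑ k, α k = 1) ∧
    ∀ j, c j ≤ ∑ k, α k * val ρ P H (g j) (lift (modM i (detToM k) π))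

/-- Optimal solutions of the linear program `LPⁱ(π)`. -/
def LPopt (ρ : S → ℝ) (P : ℕ → S → (∀ i, A i) → S → ℝ) (H J : ℕ)
    (g : Fin J → ℕ → S → (∀ i, A i) → ℝ) (c : Fin J → ℝ)
    (r : ℕ → S → (∀ i, A i) → ℝ) (i : ι) (π : MPolicy S A)
    (α : DMod S A H i → ℝ) : Prop :=
  LPfeas ρ P H J g c i π α ∧
    ∀ β, LPfeas ρ P H J g c i π β → LPobj ρ P H r i π β ≤ LPobj ρ P H r i π α

/-- Optimal value `Ψⁱ(π)` of the linear program `LPⁱ(π)`. -/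
noncomputable def Psi (ρ : S → ℝ) (P : ℕ → S → (∀ i, A i) → S → ℝ) (H J : ℕ)
    (g : Fin J → ℕ → S → (∀ i, A i) → ℝ) (c : Fin J → ℝ)
    (r : ℕ → S → (∀ i, A i) → ℝ) (i : ι) (π : MPolicy S A) : ℝ :=
  sSup ((fun α => LPobj ρ P H r i π α) '' {α | LPfeas ρ P H J g c i π α})

end
end MG

section Aux

open MG

variable {S : Type} {ι : Type} {A : ι → Type}
variable [Fintype S] [DecidableEq S] [Fintype ι] [DecidableEq ι]
variable [∀ i, Fintype (A i)] [∀ i, DecidableEq (A i)]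

/-- State occupancy measure of a Markovian policy. -/
noncomputable def nuAux (ρ : S → ℝ) (P : ℕ → S → (∀ i, A i) → S → ℝ)
    (σ : MPolicy S A) : ℕ → S → ℝ
  | 0 => ρ
  | (t+1) => fun s' => ∑ s, ∑ a, nuAux ρ P σ t s * σ t s a * P t s a s'

lemma sum_histProb (ρ : S → ℝ) (P : ℕ → S → (∀ i, A i) → S → ℝ) (σ : MPolicy S A) :
    ∀ (t : ℕ) (s : S),
      (∑ h : Fin t → S × (∀ i, A i), histProb ρ P (lift σ) t h s) = nuAux ρ P σ t s
  | 0, s => by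
      simp [histProb, nuAux]
  | (t+1), s => by
      rw [← Equiv.sum_comp (Fin.snocEquiv (fun _ : Fin (t+1) => S × (∀ i, A i)))
        (fun h => histProb ρ P (lift σ) (t+1) h s)]
      rw [Fintype.sum_prod_type]
      have hterm : ∀ (z : S × (∀ i, A i)) (h' : Fin t → S × (∀ i, A i)),
          histProb ρ P (lift σ) (t+1)
              (Fin.snocEquiv (fun _ : Fin (t+1) => S × (∀ i, A i)) (z, h')) s
            = histProb ρ P (lift σ) t h' z.1 * σ t z.1 z.2 * P t z.1 z.2 s := by
        intro z h'
        have h1 : (fun k : Fin t =>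
            (Fin.snocEquiv (fun _ : Fin (t+1) => S × (∀ i, A i)) (z, h')) k.castSucc) = h' := by
          funext k; simp
        have h2 : (Fin.snocEquiv (fun _ : Fin (t+1) => S × (∀ i, A i)) (z, h'))
            (Fin.last t) = z := by simp
        show histProb ρ P (lift σ) t _ _ * _ * _ = _
        rw [h1, h2]
        rfl
      show (∑ z : S × (∀ i, A i), ∑ h' : Fin t → S × (∀ i, A i),
          histProb ρ P (lift σ) (t+1)
            (Fin.snocEquiv (fun _ : Fin (t+1) => S × (∀ i, A i)) (z, h')) s) = _
      simp only [hterm]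
      rw [Fintype.sum_prod_type]
      show _ = ∑ s₀, ∑ a, nuAux ρ P σ t s₀ * σ t s₀ a * P t s₀ a s
      refine Finset.sum_congr rfl fun s₀ _ => Finset.sum_congr rfl fun a _ => ?_
      rw [← Finset.sum_mul, ← Finset.sum_mul, sum_histProb ρ P σ t s₀]

lemma occ_lift (ρ : S → ℝ) (P : ℕ → S → (∀ i, A i) → S → ℝ) (σ : MPolicy S A)
    (t : ℕ) (s : S) (a : ∀ i, A i) :
    occ ρ P (lift σ) t s a = nuAux ρ P σ t s * σ t s a := by
  unfold occ
  rw [← sum_histProb ρ P σ t s, Finset.sum_mul]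
  rfl

lemma nuAux_nonneg {ρ : S → ℝ} {P : ℕ → S → (∀ i, A i) → S → ℝ} {σ : MPolicy S A}
    (hρ : ∀ s, 0 ≤ ρ s) (hP : ∀ t s a s', 0 ≤ P t s a s')
    (hσ : ∀ t s a, 0 ≤ σ t s a) : ∀ t s, 0 ≤ nuAux ρ P σ t s
  | 0, s => hρ s
  | (t+1), s' => by
      refine Finset.sum_nonneg fun s _ => Finset.sum_nonneg fun a _ => ?_
      exact mul_nonneg (mul_nonneg (nuAux_nonneg hρ hP hσ t s) (hσ t s a)) (hP t s a s')

lemma nuAux_congr (ρ : S → ℝ) (P : ℕ → S → (∀ i, A i) → S → ℝ) (σ σ' : MPolicy S A) :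
    ∀ (t : ℕ), (∀ t', t' < t → ∀ s a, σ t' s a = σ' t' s a) →
      ∀ s, nuAux ρ P σ t s = nuAux ρ P σ' t s
  | 0, _, s => rfl
  | (t+1), h, s' => by
      show (∑ s, ∑ a, nuAux ρ P σ t s * σ t s a * P t s a s') = _
      refine Finset.sum_congr rfl fun s _ => Finset.sum_congr rfl fun a _ => ?_
      rw [nuAux_congr ρ P σ σ' t (fun t' ht' => h t' (ht'.trans (Nat.lt_succ_self t))) s,
        h t (Nat.lt_succ_self t) s a]

/-- Marginalization of a product measure over one coordinate. -/
lemma margAux {J V : Type} [Fintype J] [DecidableEq J] [Fintype V] [DecidableEq V]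
    (W : J → V → ℝ) (hW : ∀ j, ∑ v, W j v = 1) (j₀ : J) (c : V)
    (F : (J → V) → ℝ) (hF : ∀ g v, F (Function.update g j₀ v) = F g) :
    (∑ g : J → V, (∏ j, W j (g j)) * F g * (if c = g j₀ then 1 else 0))
      = W j₀ c * ∑ g : J → V, (∏ j, W j (g j)) * F g := by
  classical
  set G : V → ℝ := fun v => ∑ g ∈ Finset.univ.filter (fun g : J → V => g j₀ = v),
      (∏ j ∈ Finset.univ.erase j₀, W j (g j)) * F g with hG
  have hGconst : ∀ v, G v = G c := by
    intro v
    refine Finset.sum_nbij' (fun g => Function.update g j₀ c)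
      (fun g => Function.update g j₀ v) ?_ ?_ ?_ ?_ ?_
    · intro g hg; simp [Function.update_self]
    · intro g hg; simp [Function.update_self]
    · intro g hg
      have hg' : g j₀ = v := (Finset.mem_filter.mp hg).2
      show Function.update (Function.update g j₀ c) j₀ v = g
      rw [Function.update_idem, ← hg', Function.update_eq_self]
    · intro g hg
      have hg' : g j₀ = c := (Finset.mem_filter.mp hg).2
      show Function.update (Function.update g j₀ v) j₀ c = g
      rw [Function.update_idem, ← hg', Function.update_eq_self]
    · intro g hg
      show (∏ j ∈ Finset.univ.erase j₀, W j (g j)) * F g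
          = (∏ j ∈ Finset.univ.erase j₀, W j (Function.update g j₀ c j)) *
            F (Function.update g j₀ c)
      rw [hF]
      congr 1
      refine Finset.prod_congr rfl fun x hx => ?_
      rw [Function.update_of_ne (Finset.ne_of_mem_erase hx)]
  have key : ∀ v : V, (∑ g ∈ Finset.univ.filter (fun g : J → V => g j₀ = v),
      (∏ j, W j (g j)) * F g) = W j₀ v * G v := by
    intro v
    rw [hG, Finset.mul_sum]
    refine Finset.sum_congr rfl fun g hg => ?_
    have hg' : g j₀ = v := (Finset.mem_filter.mp hg).2
    rw [← Finset.mul_prod_erase Finset.univ _ (Finset.mem_univ j₀), hg']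
    ring
  have total : (∑ g : J → V, (∏ j, W j (g j)) * F g) = G c := by
    rw [← Finset.sum_fiberwise Finset.univ (fun g : J → V => g j₀)
      (fun g => (∏ j, W j (g j)) * F g)]
    calc (∑ v, ∑ g ∈ Finset.univ.filter (fun g : J → V => g j₀ = v), (∏ j, W j (g j)) * F g)
        = ∑ v, W j₀ v * G c := by
          refine Finset.sum_congr rfl fun v _ => ?_
          rw [key v, hGconst v]
      _ = G c := by rw [← Finset.sum_mul, hW j₀, one_mul]
  have lhs : (∑ g : J → V, (∏ j, W j (g j)) * F g * (if c = g j₀ then 1 else 0))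
      = W j₀ c * G c := by
    have : ∀ g : J → V, (∏ j, W j (g j)) * F g * (if c = g j₀ then 1 else 0)
        = if g j₀ = c then (∏ j, W j (g j)) * F g else 0 := by
      intro g
      by_cases h : g j₀ = c
      · rw [if_pos h, if_pos h.symm, mul_one]
      · rw [if_neg h, if_neg (fun hh => h hh.symm), mul_zero]
    simp only [this]
    rw [← Finset.sum_filter, key c]
  rw [lhs, total]


lemma mainAux (ρ : S → ℝ) (P : ℕ → S → (∀ i, A i) → S → ℝ) (π : MPolicy S A)
    (H : ℕ) (i : ι) (φbar : MMod S A i) (α : DMod S A H i → ℝ)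
    (hα1 : (∑ k : DMod S A H i, α k) = 1)
    (hcompat : ∀ (t : ℕ) (ht : t < H) (s : S) (b : A i) (c : A i),
      (∑ k : DMod S A H i, α k * nuAux ρ P (modM i (detToM k) π) t s *
          (if c = k ⟨t, ht⟩ s b then 1 else 0))
        = φbar t s b c * ∑ k : DMod S A H i, α k * nuAux ρ P (modM i (detToM k) π) t s) :
    ∀ t < H, ∀ (s : S) (a : ∀ i, A i),
      occ ρ P (lift (modM i φbar π)) t s a =
        ∑ k : DMod S A H i, α k * occ ρ P (lift (modM i (detToM k) π)) t s a := by
  have point : ∀ (t : ℕ) (ht : t < H),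
      (∀ s, nuAux ρ P (modM i φbar π) t s
        = ∑ k : DMod S A H i, α k * nuAux ρ P (modM i (detToM k) π) t s) →
      ∀ (s : S) (a : ∀ i, A i),
        nuAux ρ P (modM i φbar π) t s * modM i φbar π t s a
          = ∑ k : DMod S A H i, α k *
              (nuAux ρ P (modM i (detToM k) π) t s * modM i (detToM k) π t s a) := by
    intro t ht hinv s a
    rw [hinv s]
    have hmod : ∀ k : DMod S A H i, modM i (detToM k) π t s a
        = ∑ b : A i, (if a i = k ⟨t, ht⟩ s b then 1 else 0) * π t s (Function.update a i b) := by
      intro k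
      unfold modM detToM
      refine Finset.sum_congr rfl fun b _ => ?_
      rw [dif_pos ht]
    calc (∑ k : DMod S A H i, α k * nuAux ρ P (modM i (detToM k) π) t s) * modM i φbar π t s a
        = ∑ b : A i, (φbar t s b (a i) *
            (∑ k : DMod S A H i, α k * nuAux ρ P (modM i (detToM k) π) t s))
            * π t s (Function.update a i b) := by
          unfold modM
          rw [Finset.mul_sum]
          exact Finset.sum_congr rfl fun b _ => by ring
      _ = ∑ b : A i, (∑ k : DMod S A H i, α k * nuAux ρ P (modM i (detToM k) π) t s *
            (if a i = k ⟨t, ht⟩ s b then 1 else 0)) * π t s (Function.update a i b) := by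
          exact Finset.sum_congr rfl fun b _ => by rw [hcompat t ht s b (a i)]
      _ = ∑ k : DMod S A H i, α k *
            (nuAux ρ P (modM i (detToM k) π) t s * modM i (detToM k) π t s a) := by
          simp only [Finset.sum_mul]
          rw [Finset.sum_comm]
          refine Finset.sum_congr rfl fun k _ => ?_
          rw [hmod k, Finset.mul_sum, Finset.mul_sum]
          exact Finset.sum_congr rfl fun b _ => by ring
  have inv : ∀ t, t ≤ H → ∀ s, nuAux ρ P (modM i φbar π) t s
      = ∑ k : DMod S A H i, α k * nuAux ρ P (modM i (detToM k) π) t s := by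
    intro t
    induction t with
    | zero =>
        intro _ s
        show ρ s = ∑ k : DMod S A H i, α k * ρ s
        rw [← Finset.sum_mul, hα1, one_mul]
    | succ t ih =>
        intro hle s'
        have ht : t < H := lt_of_lt_of_le (Nat.lt_succ_self t) hle
        have ihH := ih (le_of_lt ht)
        have hterm : ∀ (s : S) (a : ∀ i, A i),
            nuAux ρ P (modM i φbar π) t s * modM i φbar π t s a * P t s a s'
              = ∑ k : DMod S A H i, α k * (nuAux ρ P (modM i (detToM k) π) t s *
                  modM i (detToM k) π t s a * P t s a s') := by
          intro s a
          rw [point t ht ihH s a, Finset.sum_mul]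
          exact Finset.sum_congr rfl fun k _ => by ring
        show (∑ s, ∑ a, nuAux ρ P (modM i φbar π) t s * modM i φbar π t s a * P t s a s') = _
        simp only [hterm]
        calc (∑ s, ∑ a, ∑ k : DMod S A H i, α k * (nuAux ρ P (modM i (detToM k) π) t s *
                modM i (detToM k) π t s a * P t s a s'))
            = ∑ s, ∑ k : DMod S A H i, ∑ a, α k * (nuAux ρ P (modM i (detToM k) π) t s *
                modM i (detToM k) π t s a * P t s a s') :=
              Finset.sum_congr rfl fun s _ => Finset.sum_comm
          _ = ∑ k : DMod S A H i, ∑ s, ∑ a, α k * (nuAux ρ P (modM i (detToM k) π) t s *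
                modM i (detToM k) π t s a * P t s a s') := Finset.sum_comm
          _ = ∑ k : DMod S A H i, α k * nuAux ρ P (modM i (detToM k) π) (t+1) s' := by
              refine Finset.sum_congr rfl fun k _ => ?_
              show _ = α k * ∑ s, ∑ a, nuAux ρ P (modM i (detToM k) π) t s *
                  modM i (detToM k) π t s a * P t s a s'
              rw [Finset.mul_sum]
              exact Finset.sum_congr rfl fun s _ => (Finset.mul_sum _ _ _).symm
  intro t ht s a
  rw [occ_lift, point t ht (inv t (le_of_lt ht)) s a]
  refine Finset.sum_congr rfl fun k _ => ?_
  rw [occ_lift]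


def curryE (H : ℕ) (i : ι) : ((Fin H × S × A i) → A i) ≃ DMod S A H i where
  toFun g := fun t s b => g (t, s, b)
  invFun k := fun j => k j.1 j.2.1 j.2.2
  left_inv g := rfl
  right_inv k := rfl

@[simp] lemma curryE_apply {H : ℕ} {i : ι} (g : (Fin H × S × A i) → A i)
    (t : Fin H) (s : S) (b : A i) : curryE H i g t s b = g (t, s, b) := rfl

noncomputable def prodα (H : ℕ) (i : ι) (φbar : MMod S A i) (k : DMod S A H i) : ℝ :=
  ∏ j : Fin H × S × A i, φbar j.1 j.2.1 j.2.2 (k j.1 j.2.1 j.2.2)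

lemma prodα_sum_one {H : ℕ} {i : ι} {φbar : MMod S A i} (hφ : IsMMod φbar) :
    (∑ k : DMod S A H i, prodα H i φbar k) = 1 := by
  rw [← Equiv.sum_comp (curryE (S := S) (A := A) H i) (prodα H i φbar)]
  have h1 : ∀ g : (Fin H × S × A i) → A i,
      prodα H i φbar (curryE H i g) = ∏ j : Fin H × S × A i, φbar j.1 j.2.1 j.2.2 (g j) :=
    fun g => rfl
  simp only [h1]
  rw [← Fintype.prod_sum (fun (j : Fin H × S × A i) (v : A i) => φbar j.1 j.2.1 j.2.2 v)]
  exact Finset.prod_eq_one fun j _ => (hφ j.1 j.2.1 j.2.2).2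

lemma prodα_compat (ρ : S → ℝ) (P : ℕ → S → (∀ i, A i) → S → ℝ) (π : MPolicy S A)
    {H : ℕ} {i : ι} {φbar : MMod S A i} (hφ : IsMMod φbar)
    (t : ℕ) (ht : t < H) (s : S) (b c : A i) :
    (∑ k : DMod S A H i, prodα H i φbar k * nuAux ρ P (modM i (detToM k) π) t s *
        (if c = k ⟨t, ht⟩ s b then 1 else 0))
      = φbar t s b c *
          ∑ k : DMod S A H i, prodα H i φbar k * nuAux ρ P (modM i (detToM k) π) t s := by
  have hF : ∀ (g : (Fin H × S × A i) → A i) (v : A i),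
      nuAux ρ P (modM i (detToM (curryE H i
          (Function.update g ((⟨t, ht⟩ : Fin H), s, b) v))) π) t s
        = nuAux ρ P (modM i (detToM (curryE H i g)) π) t s := by
    intro g v
    refine nuAux_congr ρ P _ _ t ?_ s
    intro t' ht' s' a'
    unfold modM
    refine Finset.sum_congr rfl fun b' _ => ?_
    congr 1
    unfold detToM
    by_cases hH : t' < H
    · rw [dif_pos hH, dif_pos hH]
      have hne : (((⟨t', hH⟩ : Fin H), s', b') : Fin H × S × A i)
          ≠ ((⟨t, ht⟩ : Fin H), s, b) := by
        intro h
        have htt : t' = t := congrArg (fun p : Fin H × S × A i => (p.1 : ℕ)) h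
        omega
      rw [curryE_apply, curryE_apply, Function.update_of_ne hne]
    · rw [dif_neg hH, dif_neg hH]
  have hm := margAux (fun (j : Fin H × S × A i) (v : A i) => φbar j.1 j.2.1 j.2.2 v)
    (fun j => (hφ j.1 j.2.1 j.2.2).2) ((⟨t, ht⟩ : Fin H), s, b) c
    (fun g => nuAux ρ P (modM i (detToM (curryE H i g)) π) t s) hF
  calc (∑ k : DMod S A H i, prodα H i φbar k * nuAux ρ P (modM i (detToM k) π) t s *
        (if c = k ⟨t, ht⟩ s b then 1 else 0))
      = ∑ g : (Fin H × S × A i) → A i,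
          (∏ j : Fin H × S × A i, φbar j.1 j.2.1 j.2.2 (g j)) *
            nuAux ρ P (modM i (detToM (curryE H i g)) π) t s *
            (if c = g ((⟨t, ht⟩ : Fin H), s, b) then 1 else 0) := by
        rw [← Equiv.sum_comp (curryE (S := S) (A := A) H i)]
        refine Finset.sum_congr rfl fun g _ => ?_
        simp only [prodα, curryE_apply]
        rfl
    _ = φbar t s b c * ∑ g : (Fin H × S × A i) → A i,
          (∏ j : Fin H × S × A i, φbar j.1 j.2.1 j.2.2 (g j)) *
            nuAux ρ P (modM i (detToM (curryE H i g)) π) t s := hm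
    _ = φbar t s b c * ∑ k : DMod S A H i, prodα H i φbar k *
          nuAux ρ P (modM i (detToM k) π) t s := by
        congr 1
        refine Eq.symm ?_
        rw [← Equiv.sum_comp (curryE (S := S) (A := A) H i)]
        refine Finset.sum_congr rfl fun g _ => ?_
        simp only [prodα, curryE_apply]

lemma detToM_nonneg {H : ℕ} {i : ι} (k : DMod S A H i) (t : ℕ) (s : S) (b c : A i) :
    0 ≤ detToM k t s b c := by
  unfold detToM
  split_ifs <;> norm_num

lemma modMdet_nonneg {π : MPolicy S A} (hπ : IsMPolicy π) {H : ℕ} {i : ι}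
    (k : DMod S A H i) : ∀ t s a, 0 ≤ modM i (detToM k) π t s a := by
  intro t s a
  exact Finset.sum_nonneg fun b _ =>
    mul_nonneg (detToM_nonneg k t s b _) ((hπ t s).1 _)

noncomputable def phiOf (ρ : S → ℝ) (P : ℕ → S → (∀ i, A i) → S → ℝ) (π : MPolicy S A)
    (H : ℕ) (i : ι) (α : DMod S A H i → ℝ) : MMod S A i :=
  fun t s b c =>
    if ht : t < H then
      (if (∑ k : DMod S A H i, α k * nuAux ρ P (modM i (detToM k) π) t s) = 0 then
        (if c = b then 1 else 0)
      else (∑ k : DMod S A H i, α k * nuAux ρ P (modM i (detToM k) π) t s *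
              (if c = k ⟨t, ht⟩ s b then 1 else 0)) /
           (∑ k : DMod S A H i, α k * nuAux ρ P (modM i (detToM k) π) t s))
    else (if c = b then 1 else 0)

lemma phiOf_isMMod {ρ : S → ℝ} {P : ℕ → S → (∀ i, A i) → S → ℝ} {π : MPolicy S A}
    {H : ℕ} {i : ι} {α : DMod S A H i → ℝ}
    (hρ : IsDist ρ) (hπ : IsMPolicy π) (hP : IsKernel P) (hα0 : ∀ k, 0 ≤ α k) :
    IsMMod (phiOf ρ P π H i α) := by
  have hNu : ∀ (k : DMod S A H i) (t : ℕ) (s : S),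
      0 ≤ nuAux ρ P (modM i (detToM k) π) t s :=
    fun k => nuAux_nonneg hρ.1 (fun t s a s' => (hP t s a).1 s') (modMdet_nonneg hπ k)
  intro t s b
  constructor
  · intro c
    unfold phiOf
    split_ifs with ht h0 hcb
    · norm_num
    · norm_num
    · exact div_nonneg
        (Finset.sum_nonneg fun k _ =>
          mul_nonneg (mul_nonneg (hα0 k) (hNu k t s)) (by split_ifs <;> norm_num))
        (Finset.sum_nonneg fun k _ => mul_nonneg (hα0 k) (hNu k t s))
    all_goals norm_num
  · unfold phiOf
    by_cases ht : t < H
    · simp only [dif_pos ht]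
      by_cases h0 : (∑ k : DMod S A H i, α k * nuAux ρ P (modM i (detToM k) π) t s) = 0
      · simp only [if_pos h0]
        simp
      · simp only [if_neg h0]
        rw [← Finset.sum_div, div_eq_one_iff_eq h0]
        rw [Finset.sum_comm]
        refine Finset.sum_congr rfl fun k _ => ?_
        rw [← Finset.mul_sum]
        simp
    · simp only [dif_neg ht]
      simp

lemma phiOf_compat {ρ : S → ℝ} {P : ℕ → S → (∀ i, A i) → S → ℝ} {π : MPolicy S A}
    {H : ℕ} {i : ι} {α : DMod S A H i → ℝ}
    (hρ : IsDist ρ) (hπ : IsMPolicy π) (hP : IsKernel P) (hα0 : ∀ k, 0 ≤ α k) :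
    ∀ (t : ℕ) (ht : t < H) (s : S) (b c : A i),
      (∑ k : DMod S A H i, α k * nuAux ρ P (modM i (detToM k) π) t s *
          (if c = k ⟨t, ht⟩ s b then 1 else 0))
        = phiOf ρ P π H i α t s b c *
            ∑ k : DMod S A H i, α k * nuAux ρ P (modM i (detToM k) π) t s := by
  have hNu : ∀ (k : DMod S A H i) (t : ℕ) (s : S),
      0 ≤ nuAux ρ P (modM i (detToM k) π) t s :=
    fun k => nuAux_nonneg hρ.1 (fun t s a s' => (hP t s a).1 s') (modMdet_nonneg hπ k)
  intro t ht s b c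
  unfold phiOf
  rw [dif_pos ht]
  by_cases h0 : (∑ k : DMod S A H i, α k * nuAux ρ P (modM i (detToM k) π) t s) = 0
  · rw [if_pos h0, h0, mul_zero]
    have hz := (Finset.sum_eq_zero_iff_of_nonneg
      (fun k _ => mul_nonneg (hα0 k) (hNu k t s))).mp h0
    exact Finset.sum_eq_zero fun k _ => by rw [hz k (Finset.mem_univ k), zero_mul]
  · rw [if_neg h0, div_mul_cancel₀ _ h0]

end Aux
open MG in
/-- The occupancy measure of a Markovian stochastic modification equals a convex
combination of occupancy measures of Markovian deterministic modifications, and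
conversely every such convex combination is realized by a Markovian stochastic
modification. -/
theorem markovian_modification_convex_combination_deterministic
    {S : Type} {ι : Type} {A : ι → Type}
    [Fintype S] [DecidableEq S] [Fintype ι] [DecidableEq ι]
    [∀ i, Fintype (A i)] [∀ i, DecidableEq (A i)] [∀ i, Nonempty (A i)]
    (ρ : S → ℝ) (P : ℕ → S → (∀ i, A i) → S → ℝ) (π : MPolicy S A)
    (hρ : IsDist ρ) (hπ : IsMPolicy π) (hP : IsKernel P)
    (H : ℕ) (i : ι) :
    (∀ φbar : MMod S A i, IsMMod φbar →
      ∃ α : DMod S A H i → ℝ, (∀ k, 0 ≤ α k) ∧ (∑ k, α k = 1) ∧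
        ∀ t < H, ∀ (s : S) (a : ∀ i, A i),
          occ ρ P (lift (modM i φbar π)) t s a =
            ∑ k, α k * occ ρ P (lift (modM i (detToM k) π)) t s a) ∧
    (∀ α : DMod S A H i → ℝ, (∀ k, 0 ≤ α k) → (∑ k, α k = 1) →
      ∃ φbar : MMod S A i, IsMMod φbar ∧
        ∀ t < H, ∀ (s : S) (a : ∀ i, A i),
          occ ρ P (lift (modM i φbar π)) t s a =
            ∑ k, α k * occ ρ P (lift (modM i (detToM k) π)) t s a) := by
  constructor
  · intro φbar hφ
    exact ⟨prodα H i φbar,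
      fun k => Finset.prod_nonneg fun j _ => (hφ j.1 j.2.1 j.2.2).1 _,
      prodα_sum_one hφ,
      mainAux ρ P π H i φbar (prodα H i φbar) (prodα_sum_one hφ)
        (fun t ht s b c => prodα_compat ρ P π hφ t ht s b c)⟩
  · intro α hα0 hα1
    exact ⟨phiOf ρ P π H i α, phiOf_isMMod hρ hπ hP hα0,
      mainAux ρ P π H i (phiOf ρ P π H i α) α hα1 (phiOf_compat hρ hπ hP hα0)⟩
end

section
/- In an unconstrained finite-horizon Markov game, a Markovian policy π is a correlated equilibrium (robust to all non-Markovian stochastic modifications) if and only if for every player i, V^{r^i}(π) ≥ max over Markovian deterministic modifications φ^i ∈ Φ^i_{M,det} of V^{r^i}(φ^i ∘ π). -/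
open Finset

section Aux

open MG Finset
set_option linter.unusedSectionVars false

variable {S : Type} {ι : Type} {A : ι → Type}
variable [Fintype S] [DecidableEq S] [Fintype ι] [DecidableEq ι]
variable [∀ i, Fintype (A i)] [∀ i, DecidableEq (A i)]

/-- Q-value in the deviator's auxiliary MDP (unnormalized over the recommendation `b`). -/
noncomputable def Qh (P : ℕ → S → (∀ i, A i) → S → ℝ) (π : MPolicy S A)
    (f : ℕ → S → (∀ i, A i) → ℝ) (i : ι) (t : ℕ) (V : S → ℝ) (s : S) (b c : A i) : ℝ :=
  ∑ a : ∀ j, A j, if a i = b then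
    π t s a * (f t s (Function.update a i c) +
      ∑ s', P t s (Function.update a i c) s' * V s')
  else 0

variable [∀ i, Nonempty (A i)]

/-- Optimal value function of the deviator's auxiliary MDP. -/
noncomputable def Vs (P : ℕ → S → (∀ i, A i) → S → ℝ) (π : MPolicy S A)
    (f : ℕ → S → (∀ i, A i) → ℝ) (i : ι) (H : ℕ) (t : ℕ) : S → ℝ :=
  if h : t < H then fun s =>
    ∑ b : A i, Finset.univ.sup' Finset.univ_nonempty
      (fun c => Qh P π f i t (Vs P π f i H (t+1)) s b c)
  else fun _ => 0
termination_by H - t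
decreasing_by omega

lemma Vs_of_lt {P : ℕ → S → (∀ i, A i) → S → ℝ} {π : MPolicy S A}
    {f : ℕ → S → (∀ i, A i) → ℝ} {i : ι} {H t : ℕ} (h : t < H) (s : S) :
    Vs P π f i H t s = ∑ b : A i, Finset.univ.sup' Finset.univ_nonempty
      (fun c => Qh P π f i t (Vs P π f i H (t+1)) s b c) := by
  rw [Vs, dif_pos h]

lemma Vs_of_le {P : ℕ → S → (∀ i, A i) → S → ℝ} {π : MPolicy S A}
    {f : ℕ → S → (∀ i, A i) → ℝ} {i : ι} {H t : ℕ} (h : H ≤ t) (s : S) :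
    Vs P π f i H t s = 0 := by
  rw [Vs, dif_neg (by omega)]

/-- Reindexing sum over joint actions via updating coordinate `i`. -/
lemma sum_update_eq (i : ι) (b : A i) (F : (∀ j, A j) → ℝ) :
    ∑ c : A i, ∑ a : ∀ j, A j, (if a i = b then F (Function.update a i c) else 0)
      = ∑ a : ∀ j, A j, F a := by
  classical
  have h1 : (∑ c : A i, ∑ a : ∀ j, A j, (if a i = b then F (Function.update a i c) else 0))
      = ∑ p : A i × (∀ j, A j), (if p.2 i = b then F (Function.update p.2 i p.1) else 0) :=
    (Fintype.sum_prod_type (fun p : A i × (∀ j, A j) => if p.2 i = b then F (Function.update p.2 i p.1) else 0)).symm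
  rw [h1]
  simp only [← Finset.sum_filter]
  apply Finset.sum_bij' (fun (p : A i × (∀ j, A j)) _ => Function.update p.2 i p.1)
    (fun (a : ∀ j, A j) _ => (a i, Function.update a i b))
  · intro p hp; exact Finset.mem_univ _
  · intro a ha
    simp only [Finset.mem_filter, Finset.mem_univ, true_and] at *
    simp [Function.update_self]
  · intro p hp
    simp only [Finset.mem_filter, Finset.mem_univ, true_and] at hp
    ext1
    · simp [Function.update_self]
    · simp only [Function.update_idem]
      rw [← hp, Function.update_eq_self]
  · intro a ha
    simp only [Function.update_idem]
    rw [Function.update_eq_self]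
  · intro p hp; rfl

/-- Expansion of the one-step expected payoff of a modified policy. -/
lemma expand_mod (P : ℕ → S → (∀ i, A i) → S → ℝ) (π : MPolicy S A)
    (f : ℕ → S → (∀ i, A i) → ℝ) (i : ι) (φ : NMMod S A i) (t : ℕ)
    (h : Fin t → S × (∀ i, A i)) (s : S) (V : S → ℝ) :
    ∑ a : ∀ j, A j, modNM i φ π t h s a *
        (f t s a + ∑ s', P t s a s' * V s')
      = ∑ b : A i, ∑ c : A i, φ t h s b c * Qh P π f i t V s b c := by
  classical
  simp only [modNM, Finset.sum_mul]
  rw [Finset.sum_comm]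
  refine Finset.sum_congr rfl fun b _ => ?_
  rw [← sum_update_eq i b
    (fun a => φ t h s b (a i) * π t s (Function.update a i b) *
      (f t s a + ∑ s', P t s a s' * V s'))]
  refine Finset.sum_congr rfl fun c _ => ?_
  rw [Qh, Finset.mul_sum]
  refine Finset.sum_congr rfl fun a _ => ?_
  by_cases hab : a i = b
  · simp only [if_pos hab, Function.update_self, Function.update_idem]
    rw [← hab, Function.update_eq_self]
    ring
  · simp [hab]


lemma histProb_nonneg {ρ : S → ℝ} {P : ℕ → S → (∀ i, A i) → S → ℝ} {σ : HPolicy S A}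
    (hρ : ∀ s, 0 ≤ ρ s) (hP : ∀ t s a s', 0 ≤ P t s a s')
    (hσ : ∀ t h s a, 0 ≤ σ t h s a) :
    ∀ t (h : Fin t → S × (∀ i, A i)) s, 0 ≤ histProb ρ P σ t h s := by
  intro t
  induction t with
  | zero => intro h s; exact hρ s
  | succ t ih =>
    intro h s
    exact mul_nonneg (mul_nonneg (ih _ _) (hσ _ _ _ _)) (hP _ _ _ _)

lemma sum_hist_succ {X : Type} [Fintype X] (t : ℕ) (F : (Fin (t+1) → X) → ℝ) :
    ∑ h : Fin (t+1) → X, F h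
      = ∑ h : Fin t → X, ∑ x : X, F (Fin.snoc h x) := by
  have h1 : ∑ h : Fin (t+1) → X, F h = ∑ p : X × (Fin t → X), F (Fin.snoc p.2 p.1) :=
    (Fintype.sum_equiv (Fin.snocEquiv fun _ => X)
      (fun p => F (Fin.snoc p.2 p.1)) F (fun p => rfl)).symm
  rw [h1, Fintype.sum_prod_type (f := fun p : X × (Fin t → X) => F (Fin.snoc p.2 p.1))]
  exact Finset.sum_comm

lemma histProb_snoc (ρ : S → ℝ) (P : ℕ → S → (∀ i, A i) → S → ℝ) (σ : HPolicy S A)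
    (t : ℕ) (h : Fin t → S × (∀ i, A i)) (x : S × (∀ i, A i)) (s : S) :
    histProb ρ P σ (t+1) (Fin.snoc h x) s
      = histProb ρ P σ t h x.1 * σ t h x.1 x.2 * P t x.1 x.2 s := by
  simp [histProb, Fin.snoc_castSucc, Fin.snoc_last]

/-- One-step decomposition of value-style sums. -/
lemma split_step (ρ : S → ℝ) (P : ℕ → S → (∀ i, A i) → S → ℝ) (σ : HPolicy S A)
    (f : ℕ → S → (∀ i, A i) → ℝ) (t : ℕ) (W : S → ℝ) :
    ∑ h : Fin t → S × (∀ i, A i), ∑ s, histProb ρ P σ t h s *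
        (∑ a, σ t h s a * (f t s a + ∑ s', P t s a s' * W s'))
      = (∑ s, ∑ a, occ ρ P σ t s a * f t s a)
        + ∑ h' : Fin (t+1) → S × (∀ i, A i), ∑ s',
            histProb ρ P σ (t+1) h' s' * W s' := by
  classical
  have h1 : (∑ s, ∑ a, occ ρ P σ t s a * f t s a)
      = ∑ h : Fin t → S × (∀ i, A i), ∑ s, ∑ a : ∀ j, A j,
          histProb ρ P σ t h s * σ t h s a * f t s a := by
    simp only [occ, Finset.sum_mul]
    exact Eq.trans (Finset.sum_congr rfl fun s _ => Finset.sum_comm) Finset.sum_comm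
  have h2 : (∑ h' : Fin (t+1) → S × (∀ i, A i), ∑ s', histProb ρ P σ (t+1) h' s' * W s')
      = ∑ h : Fin t → S × (∀ i, A i), ∑ s, ∑ a : ∀ j, A j,
          histProb ρ P σ t h s * σ t h s a * (∑ s', P t s a s' * W s') := by
    rw [sum_hist_succ]
    refine Finset.sum_congr rfl fun h _ => ?_
    have h3 : (∑ x : S × (∀ j, A j), ∑ s', histProb ρ P σ (t+1) (Fin.snoc h x) s' * W s')
        = ∑ s, ∑ a : ∀ j, A j, ∑ s',
            histProb ρ P σ t h s * σ t h s a * P t s a s' * W s' := by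
      rw [Fintype.sum_prod_type]
      exact Finset.sum_congr rfl fun s _ => Finset.sum_congr rfl fun a _ =>
        Finset.sum_congr rfl fun s' _ => by rw [histProb_snoc]
    rw [h3]
    exact Finset.sum_congr rfl fun s _ => Finset.sum_congr rfl fun a _ => by
      rw [Finset.mul_sum]; exact Finset.sum_congr rfl fun s' _ => by ring
  rw [h1, h2, ← Finset.sum_add_distrib]
  refine Finset.sum_congr rfl fun h _ => ?_
  rw [← Finset.sum_add_distrib]
  refine Finset.sum_congr rfl fun s _ => ?_
  rw [Finset.mul_sum, ← Finset.sum_add_distrib]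
  exact Finset.sum_congr rfl fun a _ => by ring

lemma key_le (P : ℕ → S → (∀ i, A i) → S → ℝ) (π : MPolicy S A)
    (f : ℕ → S → (∀ i, A i) → ℝ) (i : ι) (φ : NMMod S A i) (hφ : IsNMMod φ)
    (t : ℕ) (h : Fin t → S × (∀ i, A i)) (s : S) (V : S → ℝ) :
    ∑ a : ∀ j, A j, modNM i φ π t h s a * (f t s a + ∑ s', P t s a s' * V s')
      ≤ ∑ b : A i, Finset.univ.sup' Finset.univ_nonempty
          (fun c => Qh P π f i t V s b c) := by
  rw [expand_mod]
  refine Finset.sum_le_sum fun b _ => ?_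
  calc ∑ c, φ t h s b c * Qh P π f i t V s b c
      ≤ ∑ c, φ t h s b c * (Finset.univ.sup' Finset.univ_nonempty
          (fun c => Qh P π f i t V s b c)) :=
        Finset.sum_le_sum fun c _ => mul_le_mul_of_nonneg_left
          (Finset.le_sup' _ (Finset.mem_univ c)) ((hφ t h s b).1 c)
    _ = _ := by rw [← Finset.sum_mul, (hφ t h s b).2, one_mul]

/-- A greedy Markovian deterministic modification. -/
noncomputable def kG (P : ℕ → S → (∀ i, A i) → S → ℝ) (π : MPolicy S A)
    (f : ℕ → S → (∀ i, A i) → ℝ) (i : ι) (H : ℕ) (t : ℕ) (s : S) (b : A i) : A i :=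
  Classical.choose (Finset.exists_mem_eq_sup' (Finset.univ_nonempty)
    (fun c => Qh P π f i t (Vs P π f i H (t+1)) s b c))

lemma kG_spec (P : ℕ → S → (∀ i, A i) → S → ℝ) (π : MPolicy S A)
    (f : ℕ → S → (∀ i, A i) → ℝ) (i : ι) (H : ℕ) (t : ℕ) (s : S) (b : A i) :
    Finset.univ.sup' Finset.univ_nonempty
        (fun c => Qh P π f i t (Vs P π f i H (t+1)) s b c)
      = Qh P π f i t (Vs P π f i H (t+1)) s b (kG P π f i H t s b) :=
  (Classical.choose_spec (Finset.exists_mem_eq_sup' (Finset.univ_nonempty)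
    (fun c => Qh P π f i t (Vs P π f i H (t+1)) s b c))).2

lemma key_eq (P : ℕ → S → (∀ i, A i) → S → ℝ) (π : MPolicy S A)
    (f : ℕ → S → (∀ i, A i) → ℝ) (i : ι) (H : ℕ) {t : ℕ} (ht : t < H)
    (h : Fin t → S × (∀ i, A i)) (s : S) :
    ∑ a : ∀ j, A j, modNM i
        (fun t _ s b c => if c = kG P π f i H t s b then (1:ℝ) else 0) π t h s a *
        (f t s a + ∑ s', P t s a s' * Vs P π f i H (t+1) s')
      = Vs P π f i H t s := by
  rw [expand_mod, Vs_of_lt ht]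
  refine Finset.sum_congr rfl fun b _ => ?_
  rw [kG_spec]
  simp only [ite_mul, one_mul, zero_mul, Finset.sum_ite_eq', Finset.mem_univ, if_true]

lemma modNM_nonneg {π : MPolicy S A} (hπ : IsMPolicy π) {i : ι} {φ : NMMod S A i}
    (hφ : IsNMMod φ) (t : ℕ) (h : Fin t → S × (∀ i, A i)) (s : S) (a : ∀ j, A j) :
    0 ≤ modNM i φ π t h s a :=
  Finset.sum_nonneg fun b _ => mul_nonneg ((hφ t h s b).1 _) ((hπ t s).1 _)

lemma tail_le (ρ : S → ℝ) (P : ℕ → S → (∀ i, A i) → S → ℝ) (π : MPolicy S A)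
    (f : ℕ → S → (∀ i, A i) → ℝ) (i : ι) (H : ℕ) (φ : NMMod S A i)
    (hρ : ∀ s, 0 ≤ ρ s) (hP : ∀ t s a s', 0 ≤ P t s a s')
    (hπ : IsMPolicy π) (hφ : IsNMMod φ) :
    ∀ n t, H - t ≤ n →
      ∑ t' ∈ Finset.Ico t H, ∑ s, ∑ a, occ ρ P (modNM i φ π) t' s a * f t' s a
        ≤ ∑ h : Fin t → S × (∀ i, A i), ∑ s,
            histProb ρ P (modNM i φ π) t h s * Vs P π f i H t s := by
  intro n
  induction n with
  | zero =>
    intro t htn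
    rw [Finset.Ico_eq_empty (by omega), Finset.sum_empty]
    simp only [Vs_of_le (show H ≤ t by omega), mul_zero, Finset.sum_const_zero, le_refl]
  | succ n ih =>
    intro t htn
    by_cases hH : H ≤ t
    · rw [Finset.Ico_eq_empty (by omega), Finset.sum_empty]
      simp only [Vs_of_le hH, mul_zero, Finset.sum_const_zero, le_refl]
    · have ht : t < H := by omega
      rw [Finset.sum_eq_sum_Ico_succ_bot ht]
      calc (∑ s, ∑ a, occ ρ P (modNM i φ π) t s a * f t s a)
            + ∑ t' ∈ Finset.Ico (t+1) H, ∑ s, ∑ a,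
                occ ρ P (modNM i φ π) t' s a * f t' s a
          ≤ (∑ s, ∑ a, occ ρ P (modNM i φ π) t s a * f t s a)
            + ∑ h : Fin (t+1) → S × (∀ i, A i), ∑ s,
                histProb ρ P (modNM i φ π) (t+1) h s * Vs P π f i H (t+1) s :=
            add_le_add le_rfl (ih (t+1) (by omega))
        _ = ∑ h : Fin t → S × (∀ i, A i), ∑ s,
              histProb ρ P (modNM i φ π) t h s *
                (∑ a, modNM i φ π t h s a *
                  (f t s a + ∑ s', P t s a s' * Vs P π f i H (t+1) s')) :=
            (split_step ρ P (modNM i φ π) f t (Vs P π f i H (t+1))).symm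
        _ ≤ ∑ h : Fin t → S × (∀ i, A i), ∑ s,
              histProb ρ P (modNM i φ π) t h s * Vs P π f i H t s := by
            refine Finset.sum_le_sum fun h _ => Finset.sum_le_sum fun s _ => ?_
            refine mul_le_mul_of_nonneg_left ?_
              (histProb_nonneg hρ hP (modNM_nonneg hπ hφ) t h s)
            rw [Vs_of_lt ht]
            exact key_le P π f i φ hφ t h s _

lemma tail_eq (ρ : S → ℝ) (P : ℕ → S → (∀ i, A i) → S → ℝ) (π : MPolicy S A)
    (f : ℕ → S → (∀ i, A i) → ℝ) (i : ι) (H : ℕ) :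
    ∀ n t, H - t ≤ n →
      ∑ t' ∈ Finset.Ico t H, ∑ s, ∑ a, occ ρ P
          (modNM i (fun t _ s b c => if c = kG P π f i H t s b then (1:ℝ) else 0) π)
          t' s a * f t' s a
        = ∑ h : Fin t → S × (∀ i, A i), ∑ s,
            histProb ρ P
              (modNM i (fun t _ s b c => if c = kG P π f i H t s b then (1:ℝ) else 0) π)
              t h s * Vs P π f i H t s := by
  set σk := modNM i (fun t (_ : Fin t → S × (∀ i, A i)) s b c =>
    if c = kG P π f i H t s b then (1:ℝ) else 0) π with hσk
  intro n
  induction n with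
  | zero =>
    intro t htn
    rw [Finset.Ico_eq_empty (by omega), Finset.sum_empty]
    simp only [Vs_of_le (show H ≤ t by omega), mul_zero, Finset.sum_const_zero]
  | succ n ih =>
    intro t htn
    by_cases hH : H ≤ t
    · rw [Finset.Ico_eq_empty (by omega), Finset.sum_empty]
      simp only [Vs_of_le hH, mul_zero, Finset.sum_const_zero]
    · have ht : t < H := by omega
      rw [Finset.sum_eq_sum_Ico_succ_bot ht, ih (t+1) (by omega),
        ← split_step ρ P σk f t (Vs P π f i H (t+1))]
      refine Finset.sum_congr rfl fun h _ => Finset.sum_congr rfl fun s _ => ?_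
      rw [key_eq P π f i H ht h s]

end Aux

open MG in
/-- In an unconstrained finite-horizon Markov game, a Markovian policy is a correlated
equilibrium (robust to all non-Markovian stochastic modifications) if and only if it is
robust to all Markovian deterministic modifications. -/
theorem correlated_equilibrium_iff_markov_deterministic
    {S : Type} {ι : Type} {A : ι → Type}
    [Fintype S] [DecidableEq S] [Fintype ι] [DecidableEq ι]
    [∀ i, Fintype (A i)] [∀ i, DecidableEq (A i)] [∀ i, Nonempty (A i)]
    (ρ : S → ℝ) (P : ℕ → S → (∀ i, A i) → S → ℝ) (π : MPolicy S A)
    (hρ : IsDist ρ) (hπ : IsMPolicy π) (hP : IsKernel P)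
    (H : ℕ) (r : ι → ℕ → S → (∀ i, A i) → ℝ) :
    (∀ (i : ι) (φ : NMMod S A i), IsNMMod φ →
        val ρ P H (r i) (modNM i φ π) ≤ val ρ P H (r i) (lift π)) ↔
    (∀ (i : ι) (k : ℕ → S → A i → A i),
        val ρ P H (r i)
            (lift (modM i (fun t s b c => if c = k t s b then 1 else 0) π)) ≤
          val ρ P H (r i) (lift π)) := by
  classical
  constructor
  · intro hce i k
    have hnm : IsNMMod (fun t (_ : Fin t → S × (∀ i, A i)) s b c =>
        if c = k t s b then (1:ℝ) else 0) := by
      intro t h s b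
      refine ⟨fun c => ?_, by simp⟩
      simp only []
      split <;> norm_num
    have hfun : modNM i (fun t (_ : Fin t → S × (∀ i, A i)) s b c =>
        if c = k t s b then (1:ℝ) else 0) π
        = lift (modM i (fun t s b c => if c = k t s b then 1 else 0) π) := rfl
    have := hce i _ hnm
    rwa [hfun] at this
  · intro hdet i φ hφ
    have hρ0 : ∀ s, 0 ≤ ρ s := hρ.1
    have hP0 : ∀ t s a s', 0 ≤ P t s a s' := fun t s a s' => (hP t s a).1 s'
    set f := r i with hf
    have hA := tail_le ρ P π f i H φ hρ0 hP0 hπ hφ H 0 (by omega)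
    have hB := tail_eq ρ P π f i H H 0 (by omega)
    rw [show Finset.Ico 0 H = Finset.range H from (Finset.range_eq_Ico H).symm] at hA hB
    have hfun : modNM i (fun t (_ : Fin t → S × (∀ i, A i)) s b c =>
        if c = kG P π f i H t s b then (1:ℝ) else 0) π
        = lift (modM i (fun t s b c => if c = kG P π f i H t s b then 1 else 0) π) := rfl
    have hd := hdet i (kG P π f i H)
    calc val ρ P H f (modNM i φ π)
        ≤ ∑ h : Fin 0 → S × (∀ i, A i), ∑ s,
            histProb ρ P (modNM i φ π) 0 h s * Vs P π f i H 0 s := hA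
      _ = ∑ h : Fin 0 → S × (∀ i, A i), ∑ s, ρ s * Vs P π f i H 0 s := rfl
      _ = ∑ h : Fin 0 → S × (∀ i, A i), ∑ s,
            histProb ρ P (modNM i
              (fun t _ s b c => if c = kG P π f i H t s b then (1:ℝ) else 0) π)
              0 h s * Vs P π f i H 0 s := rfl
      _ = val ρ P H f (modNM i
            (fun t _ s b c => if c = kG P π f i H t s b then (1:ℝ) else 0) π) := hB.symm
      _ = val ρ P H f (lift (modM i
            (fun t s b c => if c = kG P π f i H t s b then 1 else 0) π)) := by rw [hfun]
      _ ≤ val ρ P H f (lift π) := hd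
end
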